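/- Let D be a squarefree positive integer and let L ∈ 𝓡_D. Let (v₁, v₂) be a ℤ-basis of L ∩ ℤ⁴ and set a = Nr(v₁), b = 2⟨v₁,v₂⟩, c = Nr(v₂) (all integers). Then gcd(a, b, c) divides 2. -/

import Mathlib

open Quaternion

/-- A quaternion over `ℚ` has integer coordinates, i.e. lies in `ℤ⁴`. -/
def IsIntegerQuat (x : ℍ[ℚ]) : Prop :=
  ∃ a b c d : ℤ, x.re = a ∧ x.imI = b ∧ x.imJ = c ∧ x.imK = d

/-- `(v₁, v₂)` is a `ℤ`-basis of the lattice `L ∩ ℤ⁴`. -/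
def IsZBasisQuat (L : Submodule ℚ ℍ[ℚ]) (v₁ v₂ : ℍ[ℚ]) : Prop :=
  v₁ ∈ L ∧ v₂ ∈ L ∧ IsIntegerQuat v₁ ∧ IsIntegerQuat v₂ ∧ LinearIndependent ℚ ![v₁, v₂] ∧
    ∀ x ∈ L, IsIntegerQuat x → ∃ m n : ℤ, x = (m : ℚ) • v₁ + (n : ℚ) • v₂


lemma aux_sq_dvd (D g : ℕ) (hD : 0 < D) (hsf : Squarefree D) (h : g ^ 2 ∣ 4 * D) :
    g ∣ 2 := by
  have hg0 : g ≠ 0 := by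
    rintro rfl
    simp at h
    omega
  have h4D : (4 * D) ≠ 0 := by positivity
  rw [← Nat.factorization_le_iff_dvd hg0 (by norm_num)]
  have hf : (g ^ 2).factorization ≤ (4 * D).factorization :=
    (Nat.factorization_le_iff_dvd (pow_ne_zero _ hg0) h4D).mpr h
  intro p
  by_cases hp : p.Prime
  · have h1 := hf p
    rw [Nat.factorization_pow, Nat.factorization_mul (by norm_num) (by omega)] at h1
    simp only [Finsupp.coe_smul, Finsupp.coe_add, Pi.smul_apply, Pi.add_apply,
      smul_eq_mul] at h1
    have hDle : D.factorization p ≤ 1 := hsf.natFactorization_le_one p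
    by_cases hp2 : p = 2
    · subst hp2
      have h4 : (4 : ℕ).factorization 2 = 2 := by
        have : (4 : ℕ) = 2 ^ 2 := by norm_num
        rw [this, Nat.factorization_pow]
        simp [Nat.Prime.factorization Nat.prime_two]
      have h2 : (2 : ℕ).factorization 2 = 1 := by
        simp [Nat.Prime.factorization Nat.prime_two]
      rw [h4] at h1
      rw [h2]
      omega
    · have h4 : (4 : ℕ).factorization p = 0 := by
        have : (4 : ℕ) = 2 ^ 2 := by norm_num
        rw [this, Nat.factorization_pow]
        simp [Nat.Prime.factorization Nat.prime_two, Finsupp.single_apply, Ne.symm hp2]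
      have h2 : (2 : ℕ).factorization p = 0 := by
        simp [Nat.Prime.factorization Nat.prime_two, Finsupp.single_apply, Ne.symm hp2]
      rw [h4] at h1
      rw [h2]
      omega
  · simp [Nat.factorization_eq_zero_of_not_prime _ hp]

/-- Let `D` be a squarefree positive integer, `L` a 2-dimensional
`ℚ`-subspace of `ℍ(ℚ) ≅ ℚ⁴` of discriminant `D`, and `(v₁, v₂)` a `ℤ`-basis of `L ∩ ℤ⁴`.
With `a = Nr v₁`, `b = 2⟨v₁,v₂⟩` and `c = Nr v₂` (all integers), `gcd(a,b,c)` divides `2`. -/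
theorem stmt_12 (D : ℕ) (hD : 0 < D) (hDsf : Squarefree D)
    (L : Submodule ℚ ℍ[ℚ]) (hdim : Module.finrank ℚ L = 2) (v₁ v₂ : ℍ[ℚ])
    (hbasis : IsZBasisQuat L v₁ v₂)
    (hdisc : Quaternion.normSq v₁ * Quaternion.normSq v₂ - (v₁ * star v₂).re ^ 2 = (D : ℚ))
    (a b c : ℤ) (ha : (a : ℚ) = Quaternion.normSq v₁)
    (hb : (b : ℚ) = 2 * (v₁ * star v₂).re) (hc : (c : ℚ) = Quaternion.normSq v₂) :
    Int.gcd a (Int.gcd b c : ℤ) ∣ 2 := by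
  have key : ((4 * a * c - b ^ 2 : ℤ) : ℚ) = ((4 * (D : ℤ) : ℤ) : ℚ) := by
    push_cast
    rw [ha, hb, hc]
    linear_combination 4 * hdisc
  have key' : 4 * a * c - b ^ 2 = 4 * (D : ℤ) := by exact_mod_cast key
  set g : ℕ := Int.gcd a (Int.gcd b c : ℤ) with hg
  have hga : (g : ℤ) ∣ a := Int.gcd_dvd_left a (Int.gcd b c : ℤ)
  have hgbc : (g : ℤ) ∣ (Int.gcd b c : ℤ) := Int.gcd_dvd_right a (Int.gcd b c : ℤ)
  have hgb : (g : ℤ) ∣ b := hgbc.trans (Int.gcd_dvd_left b c)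
  have hgc : (g : ℤ) ∣ c := hgbc.trans (Int.gcd_dvd_right b c)
  obtain ⟨x, hx⟩ := hga
  obtain ⟨y, hy⟩ := hgb
  obtain ⟨z, hz⟩ := hgc
  have h2 : ((g : ℤ)) ^ 2 ∣ 4 * (D : ℤ) := by
    rw [← key', hx, hy, hz]
    exact ⟨4 * x * z - y ^ 2, by ring⟩
  have hnat : g ^ 2 ∣ 4 * D := by exact_mod_cast h2
  exact aux_sq_dvd D g hD hDsf hnat
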